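/- Suppose c_1 ≥ … ≥ c_n > 0 and 1 ≤ k ≤ n/2. The Searcher strategy choosing ∅ with probability 1/2 + c_{2k}/(2c_1) and the set [j] = {1,…,j} with probability c_{2k}/(2c_{j+1}) − c_{2k}/(2c_j) for each j = 1,…,2k−1 is a well-defined probability distribution, and against it every k-subset H ⊆ [n] incurs expected payoff at most c([2k])/2. Combined with the Hider's guarantee, the value of Γ([n]^(k), 2^[n]) is exactly c([2k])/2. -/

import Mathlib

open Finset

/-- Weighted symmetric-difference payoff `c(H Δ S)` (0-indexed locations). -/
def payoff (c : ℕ → ℝ) (H S : Finset ℕ) : ℝ := ∑ j ∈ (H \ S) ∪ (S \ H), c j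

lemma payoff_eq_sum (c : ℕ → ℝ) (H S : Finset ℕ) (n : ℕ) (hH : H ⊆ range n)
    (hS : S ⊆ range n) :
    payoff c H S = ∑ i ∈ range n, if i ∈ (H \ S) ∪ (S \ H) then c i else 0 := by
  rw [payoff, Finset.sum_ite_mem, Finset.inter_eq_right.mpr]
  exact union_subset (sdiff_subset.trans hH) (sdiff_subset.trans hS)

theorem stmt_15 (n k : ℕ) (c : ℕ → ℝ)
    (hpos : ∀ i < n, 0 < c i)
    (hsort : ∀ i j, i ≤ j → j < n → c j ≤ c i)
    (hk : 1 ≤ k) (hkn : 2*k ≤ n) :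
    -- Searcher strategy: choose the set {0,…,j-1} (= range j) with probability p j
    let p : ℕ → ℝ := fun j =>
      if j = 0 then 1/2 + c (2*k-1) / (2 * c 0)
      else c (2*k-1) / (2 * c j) - c (2*k-1) / (2 * c (j-1))
    -- well-defined probability distribution
    ((∀ j < 2*k, 0 ≤ p j) ∧ ∑ j ∈ Finset.range (2*k), p j = 1) ∧
    -- Searcher guarantee: every k-subset H incurs expected payoff at most c([2k])/2
    (∀ H ⊆ Finset.range n, H.card = k →
      ∑ j ∈ Finset.range (2*k), p j * payoff c H (Finset.range j)
        ≤ (∑ i ∈ Finset.range (2*k), c i) / 2) ∧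
    -- Hider guarantee, so that the value is exactly c([2k])/2
    (∃ Ht ⊆ Finset.range (2*k), Ht.card = k ∧
      ∀ S ⊆ Finset.range n,
        (∑ i ∈ Finset.range (2*k), c i) / 2
          ≤ (1/2 : ℝ) * payoff c Ht S
            + (1/2 : ℝ) * payoff c (Finset.range (2*k) \ Ht) S) := by
  intro p
  have hp0 : p 0 = 1/2 + c (2*k-1) / (2 * c 0) := rfl
  have hpS : ∀ m : ℕ, p (m+1) = c (2*k-1) / (2 * c (m+1)) - c (2*k-1) / (2 * c m) := by
    intro m; rfl
  have h2k1 : 2*k-1 < n := by omega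
  have hc2pos : 0 < c (2*k-1) := hpos _ h2k1
  have hcpos : ∀ i, i < 2*k → 0 < c i := fun i hi => hpos i (by omega)
  -- partial sums
  have hps : ∀ i, i < 2*k → ∑ j ∈ range (i+1), p j = 1/2 + c (2*k-1) / (2 * c i) := by
    intro i hi
    induction i with
    | zero => simpa using hp0
    | succ m ih =>
      rw [Finset.sum_range_succ, ih (by omega), hpS m]
      ring
  have hsum1 : ∑ j ∈ range (2*k), p j = 1 := by
    have h1 : 2*k = (2*k-1)+1 := by omega
    rw [h1, hps (2*k-1) (by omega)]
    have := (hpos _ h2k1).ne'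
    field_simp
    ring
  have hnonneg : ∀ j < 2*k, 0 ≤ p j := by
    intro j hj
    cases j with
    | zero =>
      rw [hp0]
      have h0 : 0 < c 0 := hcpos 0 (by omega)
      positivity
    | succ m =>
      rw [hpS m]
      have h1 : 0 < c (m+1) := hcpos _ hj
      have h2 : 0 < c m := hcpos _ (by omega)
      have h3 : c (m+1) ≤ c m := hsort m (m+1) (by omega) (by omega)
      have : c (2*k-1) / (2 * c m) ≤ c (2*k-1) / (2 * c (m+1)) := by gcongr
      linarith
  refine ⟨⟨hnonneg, hsum1⟩, ?_, ?_⟩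
  · -- Searcher guarantee
    intro H hH hcard
    have key : ∑ j ∈ range (2*k), p j * payoff c H (range j)
        = ∑ i ∈ range n, ∑ j ∈ range (2*k),
            p j * (if i ∈ (H \ range j) ∪ (range j \ H) then c i else 0) := by
      rw [Finset.sum_comm]
      refine Finset.sum_congr rfl fun j hj => ?_
      rw [payoff_eq_sum c H (range j) n hH
        (Finset.range_subset_range.mpr (le_trans (le_of_lt (mem_range.mp hj)) hkn)), Finset.mul_sum]
    rw [key]
    have hsplit : ∑ i ∈ range n, ∑ j ∈ range (2*k),
            p j * (if i ∈ (H \ range j) ∪ (range j \ H) then c i else 0)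
        = (∑ i ∈ range (2*k), ∑ j ∈ range (2*k),
            p j * (if i ∈ (H \ range j) ∪ (range j \ H) then c i else 0))
        + ∑ i ∈ Finset.Ico (2*k) n, ∑ j ∈ range (2*k),
            p j * (if i ∈ (H \ range j) ∪ (range j \ H) then c i else 0) := by
      rw [Finset.range_eq_Ico, ← Finset.sum_Ico_consecutive _ (Nat.zero_le (2*k)) hkn]
      rw [← Finset.range_eq_Ico]
    rw [hsplit]
    -- inner value for i < 2k
    have hinner : ∀ i, i < 2*k →
        ∑ j ∈ range (2*k), p j * (if i ∈ (H \ range j) ∪ (range j \ H) then c i else 0)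
        = c i / 2 + (if i ∈ H then c (2*k-1)/2 else -(c (2*k-1)/2)) := by
      intro i hi
      have hci : 0 < c i := hcpos i hi
      have hIco : ∑ j ∈ Finset.Ico (i+1) (2*k), p j = 1/2 - c (2*k-1) / (2 * c i) := by
        rw [Finset.sum_Ico_eq_sub _ (by omega), hsum1, hps i hi]; ring
      have hsplit2 : ∀ f : ℕ → ℝ, ∑ j ∈ range (2*k), f j
          = ∑ j ∈ range (i+1), f j + ∑ j ∈ Finset.Ico (i+1) (2*k), f j := by
        intro f
        rw [Finset.range_eq_Ico, ← Finset.sum_Ico_consecutive _ (Nat.zero_le (i+1)) (by omega)]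
        rw [← Finset.range_eq_Ico]
      by_cases hiH : i ∈ H
      · rw [hsplit2]
        have e1 : ∑ j ∈ range (i+1),
            p j * (if i ∈ (H \ range j) ∪ (range j \ H) then c i else 0)
            = ∑ j ∈ range (i+1), p j * c i := by
          refine Finset.sum_congr rfl fun j hj => ?_
          have : ¬ i < j := by have := mem_range.mp hj; omega
          simp [Finset.mem_union, Finset.mem_sdiff, Finset.mem_range, hiH, this]
        have e2 : ∑ j ∈ Finset.Ico (i+1) (2*k),
            p j * (if i ∈ (H \ range j) ∪ (range j \ H) then c i else 0)
            = 0 := by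
          refine Finset.sum_eq_zero fun j hj => ?_
          have : i < j := by have := (Finset.mem_Ico.mp hj).1; omega
          simp [Finset.mem_union, Finset.mem_sdiff, Finset.mem_range, hiH, this]
        rw [e1, e2, ← Finset.sum_mul, hps i hi, if_pos hiH]
        field_simp
        ring
      · rw [hsplit2]
        have e1 : ∑ j ∈ range (i+1),
            p j * (if i ∈ (H \ range j) ∪ (range j \ H) then c i else 0)
            = 0 := by
          refine Finset.sum_eq_zero fun j hj => ?_
          have : ¬ i < j := by have := mem_range.mp hj; omega
          simp [Finset.mem_union, Finset.mem_sdiff, Finset.mem_range, hiH, this]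
        have e2 : ∑ j ∈ Finset.Ico (i+1) (2*k),
            p j * (if i ∈ (H \ range j) ∪ (range j \ H) then c i else 0)
            = ∑ j ∈ Finset.Ico (i+1) (2*k), p j * c i := by
          refine Finset.sum_congr rfl fun j hj => ?_
          have : i < j := by have := (Finset.mem_Ico.mp hj).1; omega
          simp [Finset.mem_union, Finset.mem_sdiff, Finset.mem_range, hiH, this]
        rw [e1, e2, ← Finset.sum_mul, hIco, if_neg hiH]
        field_simp
        ring
    -- inner value for i ≥ 2k
    have houter : ∀ i ∈ Finset.Ico (2*k) n,
        ∑ j ∈ range (2*k), p j * (if i ∈ (H \ range j) ∪ (range j \ H) then c i else 0)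
        = (if i ∈ H then c i else 0) := by
      intro i hi
      have h2ki : 2*k ≤ i := (Finset.mem_Ico.mp hi).1
      have e1 : ∀ j ∈ range (2*k),
          p j * (if i ∈ (H \ range j) ∪ (range j \ H) then c i else 0)
          = p j * (if i ∈ H then c i else 0) := by
        intro j hj
        have : ¬ i < j := by have := mem_range.mp hj; omega
        by_cases hiH : i ∈ H <;>
          simp [Finset.mem_union, Finset.mem_sdiff, Finset.mem_range, hiH, this]
      rw [Finset.sum_congr rfl e1, ← Finset.sum_mul, hsum1, one_mul]
    rw [Finset.sum_congr rfl houter,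
      Finset.sum_congr rfl (fun i hi => hinner i (mem_range.mp hi))]
    -- evaluate and bound
    set A : ℕ := (H ∩ range (2*k)).card with hA
    set B : ℕ := (H \ range (2*k)).card with hB
    have hAB : A + B = k := by rw [hA, hB, Finset.card_inter_add_card_sdiff, hcard]
    have hsum2 : ∑ i ∈ range (2*k), (c i / 2 + (if i ∈ H then c (2*k-1)/2 else -(c (2*k-1)/2)))
        = (∑ i ∈ range (2*k), c i) / 2 + (A : ℝ) * (c (2*k-1)/2)
          - ((2*k - A : ℕ) : ℝ) * (c (2*k-1)/2) := by
      rw [Finset.sum_add_distrib, Finset.sum_ite, Finset.sum_const, Finset.sum_const,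
        Finset.filter_mem_eq_inter, ← Finset.sum_div]
      have h1 : (range (2*k) ∩ H).card = A := by rw [hA, Finset.inter_comm]
      have h2 : ((range (2*k)).filter (fun i => ¬ i ∈ H)).card = 2*k - A := by
        have := Finset.card_filter_add_card_filter_not
          (s := range (2*k)) (p := fun i => i ∈ H)
        rw [Finset.filter_mem_eq_inter] at this
        rw [Finset.card_range] at this
        omega
      rw [h1, h2]
      simp only [nsmul_eq_mul]
      ring
    rw [hsum2]
    have hBle : ∑ i ∈ Finset.Ico (2*k) n, (if i ∈ H then c i else 0)
        ≤ (B : ℝ) * c (2*k-1) := by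
      have step1 : ∑ i ∈ Finset.Ico (2*k) n, (if i ∈ H then c i else 0)
          ≤ ∑ i ∈ Finset.Ico (2*k) n, (if i ∈ H then c (2*k-1) else 0) := by
        refine Finset.sum_le_sum fun i hi => ?_
        by_cases hiH : i ∈ H
        · have ha := (Finset.mem_Ico.mp hi).1
          simp only [if_pos hiH]
          exact hsort (2*k-1) i (by omega) (Finset.mem_Ico.mp hi).2
        · simp [hiH]
      refine step1.trans ?_
      rw [Finset.sum_ite, Finset.sum_const, Finset.sum_const_zero, add_zero,
        Finset.filter_mem_eq_inter, nsmul_eq_mul]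
      have hIH : Finset.Ico (2*k) n ∩ H = H \ range (2*k) := by
        ext i
        constructor
        · intro hi
          obtain ⟨hi1, hi2⟩ := Finset.mem_inter.mp hi
          obtain ⟨ha, hb⟩ := Finset.mem_Ico.mp hi1
          exact Finset.mem_sdiff.mpr ⟨hi2, by simp only [Finset.mem_range]; omega⟩
        · intro hi
          obtain ⟨hi1, hi2⟩ := Finset.mem_sdiff.mp hi
          have h3 : i < n := mem_range.mp (hH hi1)
          have h4 : ¬ i < 2*k := fun h => hi2 (Finset.mem_range.mpr h)
          exact Finset.mem_inter.mpr ⟨Finset.mem_Ico.mpr ⟨by omega, h3⟩, hi1⟩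
      rw [hIH]
    have hA2k : A ≤ 2*k := by
      rw [hA]; exact le_trans (Finset.card_le_card Finset.inter_subset_right) (by simp)
    have hcast : ((2*k - A : ℕ) : ℝ) = 2*(k:ℝ) - A := by push_cast [hA2k]; ring
    have hBcast : (B : ℝ) = (k : ℝ) - A := by
      have : (A : ℝ) + B = k := by exact_mod_cast congrArg (Nat.cast : ℕ → ℝ) hAB
      linarith
    have hfinal : (∑ i ∈ range (2*k), c i) / 2 + (A : ℝ) * (c (2*k-1)/2)
          - ((2*k - A : ℕ) : ℝ) * (c (2*k-1)/2) + (B : ℝ) * c (2*k-1)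
        = (∑ i ∈ range (2*k), c i) / 2 := by
      rw [hcast, hBcast]; ring
    linarith [hBle, hfinal]
  · -- Hider guarantee
    refine ⟨range k, Finset.range_subset_range.mpr (by omega), Finset.card_range k, ?_⟩
    intro S hS
    have hkn' : k ≤ n := by omega
    have hrk : range k ⊆ range n := Finset.range_subset_range.mpr hkn'
    have hrk2 : range (2*k) \ range k ⊆ range n :=
      (Finset.sdiff_subset).trans (Finset.range_subset_range.mpr hkn)
    rw [payoff_eq_sum c (range k) S n hrk hS,
      payoff_eq_sum c (range (2*k) \ range k) S n hrk2 hS]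
    have hge : ∑ i ∈ range (2*k), c i
        ≤ ∑ i ∈ range n,
          ((if i ∈ (range k \ S) ∪ (S \ range k) then c i else 0)
           + (if i ∈ ((range (2*k) \ range k) \ S) ∪ (S \ (range (2*k) \ range k)) then c i else 0)) := by
      have h1 : ∑ i ∈ range (2*k), c i
          = ∑ i ∈ range (2*k),
            ((if i ∈ (range k \ S) ∪ (S \ range k) then c i else 0)
             + (if i ∈ ((range (2*k) \ range k) \ S) ∪ (S \ (range (2*k) \ range k)) then c i else 0)) := by
        refine Finset.sum_congr rfl fun i hi => ?_
        have hi2k : i < 2*k := mem_range.mp hi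
        by_cases hiS : i ∈ S <;> by_cases hik : i < k <;>
          simp [Finset.mem_union, Finset.mem_sdiff, Finset.mem_range, hiS, hik, hi2k]
      rw [h1]
      refine Finset.sum_le_sum_of_subset_of_nonneg
        (Finset.range_subset_range.mpr hkn) fun i hi _ => ?_
      have hci : 0 ≤ c i := le_of_lt (hpos i (mem_range.mp hi))
      positivity
    rw [Finset.sum_add_distrib] at hge
    linarith
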